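/- Let n ≥ 1, let X ∈ M_n(ℂ) be regular nilpotent, and let v₀ ∈ ℂⁿ be a nonzero vector with X^{n−1}v₀ = 0. Then there exists a diagonalizable matrix Y ∈ M_n(ℂ) which is not a scalar multiple of the identity such that the range of the commutator [X,Y] = XY − YX is contained in the line ℂv₀ (i.e., for every u ∈ ℂⁿ there is c ∈ ℂ with (XY − YX)u = c·v₀). -/

import Mathlib

/-- A matrix is diagonalizable (semisimple) if it is similar to a diagonal matrix. -/
def Matrix.IsDiagonalizable {n : ℕ} (A : Matrix (Fin n) (Fin n) ℂ) : Prop :=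
  ∃ P : Matrix (Fin n) (Fin n) ℂ, IsUnit P.det ∧ (P⁻¹ * A * P).IsDiag

namespace StmtZeroAux

open Matrix

variable {n : ℕ}

lemma vmv_mulVec (v w u : Fin n → ℂ) :
    (Matrix.vecMulVec v w).mulVec u = (w ⬝ᵥ u) • v := by
  ext i
  simp [Matrix.mulVec, Matrix.vecMulVec, dotProduct, Finset.mul_sum, mul_assoc]
  rw [Finset.sum_mul]
  exact Finset.sum_congr rfl (fun k _ => by ring)

lemma mul_vmv (B : Matrix (Fin n) (Fin n) ℂ) (v w : Fin n → ℂ) :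
    B * Matrix.vecMulVec v w = Matrix.vecMulVec (B.mulVec v) w := by
  ext i j
  simp [Matrix.mul_apply, Matrix.vecMulVec, Matrix.mulVec, dotProduct, Finset.sum_mul, mul_assoc]

lemma vmv_mul (B : Matrix (Fin n) (Fin n) ℂ) (v w : Fin n → ℂ) :
    Matrix.vecMulVec v w * B = Matrix.vecMulVec v (B.vecMul w) := by
  ext i j
  simp [Matrix.mul_apply, Matrix.vecMul, Matrix.vecMulVec, dotProduct, Finset.mul_sum, mul_assoc]

lemma vmv_mul_vmv (v w v' w' : Fin n → ℂ) :
    Matrix.vecMulVec v w * Matrix.vecMulVec v' w' = (w ⬝ᵥ v') • Matrix.vecMulVec v w' := by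
  ext i j
  simp [Matrix.mul_apply, Matrix.vecMulVec, dotProduct, Finset.sum_mul, Finset.mul_sum]
  exact Finset.sum_congr rfl (fun k _ => by ring)

lemma trace_vmv_mul (v w : Fin n → ℂ) (B : Matrix (Fin n) (Fin n) ℂ) :
    Matrix.trace (Matrix.vecMulVec v w * B) = w ⬝ᵥ B.mulVec v := by
  simp [Matrix.trace, Matrix.diag, Matrix.mul_apply, Matrix.vecMulVec, Matrix.mulVec, dotProduct,
    Finset.mul_sum]
  rw [Finset.sum_comm]
  exact Finset.sum_congr rfl (fun k _ => Finset.sum_congr rfl (fun i _ => by ring))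

lemma pow_mulVec_zero {X : Matrix (Fin n) (Fin n) ℂ} {v : Fin n → ℂ} {m : ℕ}
    (hm1 : (X ^ (m+1)).mulVec v = 0) {e : ℕ} (he : m + 1 ≤ e) :
    (X ^ e).mulVec v = 0 := by
  have h : X ^ e = X ^ (e - (m+1)) * X ^ (m+1) := by
    rw [← pow_add]; congr 1; omega
  rw [h, ← Matrix.mulVec_mulVec, hm1, Matrix.mulVec_zero]

lemma krylov_li {m : ℕ} (X : Matrix (Fin n) (Fin n) ℂ) (v : Fin n → ℂ)
    (hm : (X ^ m).mulVec v ≠ 0) (hm1 : (X ^ (m+1)).mulVec v = 0) :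
    LinearIndependent ℂ (fun j : Fin (m+1) => (X ^ (j:ℕ)).mulVec v) := by
  rw [Fintype.linearIndependent_iff]
  intro g hg
  have key : ∀ N, ∀ j : Fin (m+1), (j:ℕ) < N → g j = 0 := by
    intro N
    induction N with
    | zero => intro j hj; omega
    | succ N ih =>
      intro j hj
      rcases lt_or_ge (j:ℕ) N with h | h
      · exact ih j h
      have hjN : (j:ℕ) = N := by omega
      have hjm : (j:ℕ) ≤ m := Nat.lt_succ_iff.mp j.isLt
      have h0 : (X ^ (m - (j:ℕ))).mulVec (∑ l : Fin (m+1), g l • (X ^ (l:ℕ)).mulVec v) = 0 := by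
        rw [hg, Matrix.mulVec_zero]
      have h1 : ∑ l : Fin (m+1), g l • (X ^ (m - (j:ℕ) + (l:ℕ))).mulVec v = 0 := by
        rw [← h0, ← Matrix.mulVecLin_apply, map_sum]
        refine Finset.sum_congr rfl (fun l _ => ?_)
        rw [_root_.map_smul, Matrix.mulVecLin_apply, Matrix.mulVec_mulVec, ← pow_add]
      have h2 : ∑ l : Fin (m+1), g l • (X ^ (m - (j:ℕ) + (l:ℕ))).mulVec v
          = g j • (X ^ m).mulVec v := by
        rw [Finset.sum_eq_single j]
        · have he : m - (j:ℕ) + (j:ℕ) = m := by omega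
          rw [he]
        · intro l _ hlj
          rcases lt_or_ge (l:ℕ) (j:ℕ) with hl | hl
          · rw [ih l (by omega), zero_smul]
          · have hlj' : (j:ℕ) < (l:ℕ) := by
              rcases Nat.lt_or_ge (j:ℕ) (l:ℕ) with h' | h'
              · exact h'
              · exact absurd (Fin.ext (by omega)) hlj
            rw [pow_mulVec_zero hm1 (by omega), smul_zero]
        · intro h; exact absurd (Finset.mem_univ j) h
      rw [h2] at h1
      rcases smul_eq_zero.mp h1 with h | h
      · exact h
      · exact absurd h hm
  intro j
  exact key (m+1) j j.isLt

lemma dot_single_eq (φ : (Fin n → ℂ) →ₗ[ℂ] ℂ) (u : Fin n → ℂ) :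
    (fun k => φ (Pi.single k 1)) ⬝ᵥ u = φ u := by
  have hu : u = ∑ k : Fin n, u k • (Pi.single k 1 : Fin n → ℂ) := by
    ext k'; simp [Pi.single_apply]
  conv_rhs => rw [hu]
  rw [map_sum]
  simp [dotProduct, mul_comm]

lemma exists_psi {m : ℕ} (X : Matrix (Fin n) (Fin n) ℂ) (v : Fin n → ℂ)
    (hm1 : (X ^ (m+1)).mulVec v = 0)
    (hli : LinearIndependent ℂ (fun j : Fin (m+1) => (X ^ (j:ℕ)).mulVec v)) :
    ∃ ψ : Fin n → ℂ, (∀ i : ℕ, i < m → ψ ⬝ᵥ (X ^ i).mulVec v = 0) ∧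
      ψ ⬝ᵥ (X ^ m).mulVec v = 1 := by
  set G : Fin (m+1) → (Fin n → ℂ) := fun j => (X ^ (j:ℕ)).mulVec v with hG
  have hsr := (linearIndepOn_id_range_iff hli.injective).mpr hli
  set b := Module.Basis.extend hsr with hb
  set jm : Fin (m+1) := ⟨m, lt_add_one m⟩ with hjm
  have memm : G jm ∈ hsr.extend (Set.subset_univ _) :=
    Module.Basis.subset_extend hsr (Set.mem_range_self jm)
  set φ := b.coord ⟨G jm, memm⟩ with hφ
  have hGb : ∀ j : Fin (m+1), φ (G j) = if j = jm then 1 else 0 := by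
    intro j
    have memj : G j ∈ hsr.extend (Set.subset_univ _) :=
      Module.Basis.subset_extend hsr (Set.mem_range_self j)
    have hbj : G j = b ⟨G j, memj⟩ := (Module.Basis.extend_apply_self hsr ⟨G j, memj⟩).symm
    rw [hφ, hbj, Module.Basis.coord_apply, Module.Basis.repr_self, Finsupp.single_apply]
    by_cases h : j = jm
    · subst h; simp
    · have hne : G j ≠ G jm := fun hEq => h (hli.injective hEq)
      rw [if_neg h, if_neg (fun hEq => hne (Subtype.ext_iff.mp hEq))]
  refine ⟨fun k => φ (Pi.single k 1), ?_, ?_⟩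
  · intro i hi
    rw [dot_single_eq]
    have h1 : (X ^ i).mulVec v = G ⟨i, by omega⟩ := by simp [hG]
    rw [h1, hGb]
    rw [if_neg (by intro hEq; rw [Fin.ext_iff] at hEq; simp [hjm] at hEq; omega)]
  · rw [dot_single_eq]
    have h1 : (X ^ m).mulVec v = G jm := by simp [hG, hjm]
    rw [h1, hGb, if_pos rfl]

lemma diag_of_eigenbasis (Y : Matrix (Fin n) (Fin n) ℂ)
    (b : Module.Basis (Fin n) ℂ (Fin n → ℂ)) (d : Fin n → ℂ)
    (heig : ∀ j, Y.mulVec (b j) = d j • b j) : Y.IsDiagonalizable := by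
  classical
  set P := (Pi.basisFun ℂ (Fin n)).toMatrix ⇑b with hP
  have hPapp : ∀ i j, P i j = b j i := by
    intro i j
    rw [hP, Module.Basis.toMatrix_apply, Pi.basisFun_repr]
  have : Invertible P := (Pi.basisFun ℂ (Fin n)).invertibleToMatrix b
  have hdet : IsUnit P.det := Matrix.isUnit_det_of_invertible P
  have hYP : Y * P = P * Matrix.diagonal d := by
    ext i j
    rw [Matrix.mul_diagonal, Matrix.mul_apply]
    have h1 : ∑ k, Y i k * P k j = Y.mulVec (b j) i := by
      rw [Matrix.mulVec]
      simp only [dotProduct]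
      exact Finset.sum_congr rfl (fun k _ => by rw [hPapp])
    rw [h1, heig j, hPapp]
    exact mul_comm _ _
  refine ⟨P, hdet, ?_⟩
  have h2 : P⁻¹ * Y * P = Matrix.diagonal d := by
    rw [mul_assoc, hYP, ← mul_assoc, Matrix.nonsing_inv_mul P hdet, one_mul]
  rw [h2]
  exact Matrix.isDiag_diagonal d

set_option maxHeartbeats 1000000 in
lemma idem_eigenbasis (Y : Matrix (Fin n) (Fin n) ℂ) (h : Y * Y = Y) :
    ∃ (b : Module.Basis (Fin n) ℂ (Fin n → ℂ)) (d : Fin n → ℂ),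
      ∀ j, Y.mulVec (b j) = d j • b j := by
  classical
  have hff : ∀ u, Y.mulVec (Y.mulVec u) = Y.mulVec u := by
    intro u; rw [Matrix.mulVec_mulVec, h]
  have hcompl : IsCompl (LinearMap.ker Y.mulVecLin) (LinearMap.range Y.mulVecLin) := by
    constructor
    · rw [Submodule.disjoint_def]
      intro u hK hR
      obtain ⟨w, hw⟩ := hR
      have h0 : Y.mulVecLin u = 0 := hK
      have h1 : Y.mulVecLin u = u := by
        rw [← hw, Matrix.mulVecLin_apply, Matrix.mulVecLin_apply]
        exact hff w
      rw [← h1, h0]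
    · rw [codisjoint_iff, eq_top_iff]
      intro u _
      have hdec : u = (u - Y.mulVecLin u) + Y.mulVecLin u :=
        (sub_add_cancel u (Y.mulVecLin u)).symm
      have hker : u - Y.mulVecLin u ∈ LinearMap.ker Y.mulVecLin := by
        rw [LinearMap.mem_ker, map_sub]
        have h3 : Y.mulVecLin (Y.mulVecLin u) = Y.mulVecLin u := by
          simp only [Matrix.mulVecLin_apply]
          exact hff u
        rw [h3, sub_self]
      exact hdec ▸ Submodule.mem_sup.mpr ⟨u - Y.mulVecLin u, hker, Y.mulVecLin u, ⟨u, rfl⟩, rfl⟩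
  let bK := Module.Basis.ofVectorSpace ℂ (LinearMap.ker Y.mulVecLin)
  let bR := Module.Basis.ofVectorSpace ℂ (LinearMap.range Y.mulVecLin)
  let b0 := (bK.prod bR).map (Submodule.prodEquivOfIsCompl _ _ hcompl)
  have heig : ∀ i, Y.mulVec (b0 i) =
      (Sum.elim (fun _ => (0:ℂ)) (fun _ => (1:ℂ)) i) • b0 i := by
    intro i
    cases i with
    | inl k =>
      have hb : b0 (Sum.inl k) = ((bK k : Fin n → ℂ)) := by
        simp only [b0, Module.Basis.map_apply, Module.Basis.prod_apply, Sum.elim_inl, Function.comp_apply]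
        rw [Submodule.coe_prodEquivOfIsCompl']
        simp
      have h2 : Y.mulVec ((bK k : Fin n → ℂ)) = 0 := by
        have h3 : Y.mulVecLin ((bK k : Fin n → ℂ)) = 0 := (bK k).2
        rwa [Matrix.mulVecLin_apply] at h3
      rw [hb, h2, Sum.elim_inl, zero_smul]
    | inr r =>
      have hb : b0 (Sum.inr r) = ((bR r : Fin n → ℂ)) := by
        simp only [b0, Module.Basis.map_apply, Module.Basis.prod_apply, Sum.elim_inr, Function.comp_apply]
        rw [Submodule.coe_prodEquivOfIsCompl']
        simp
      obtain ⟨w, hw⟩ := (bR r).2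
      have h2 : Y.mulVec (bR r : Fin n → ℂ) = (bR r : Fin n → ℂ) := by
        rw [← hw, Matrix.mulVecLin_apply]
        exact hff w
      rw [hb, h2, Sum.elim_inr, one_smul]
  let e := b0.indexEquiv (Pi.basisFun ℂ (Fin n))
  refine ⟨b0.reindex e, (Sum.elim (fun _ => (0:ℂ)) (fun _ => (1:ℂ))) ∘ e.symm, ?_⟩
  intro j
  rw [Module.Basis.reindex_apply, Function.comp_apply]
  exact heig (e.symm j)

lemma main_aux (hn : 1 ≤ n) (X : Matrix (Fin n) (Fin n) ℂ)
    (m : ℕ) (hmn : m + 1 < n)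
    (v₀ : Fin n → ℂ)
    (hm1 : (X ^ (m+1)).mulVec v₀ = 0)
    (ψ : Fin n → ℂ)
    (hdot : ∀ e : ℕ, ψ ⬝ᵥ (X ^ e).mulVec v₀ = if e = m then 1 else 0) :
    ∃ Y : Matrix (Fin n) (Fin n) ℂ, (Y * Y = Y) ∧
      (¬ ∃ c : ℂ, Y = c • (1 : Matrix (Fin n) (Fin n) ℂ)) ∧
      ∀ u : Fin n → ℂ, ∃ c : ℂ, (X * Y - Y * X).mulVec u = c • v₀ := by
  classical
  set A := Matrix.vecMulVec v₀ ψ with hA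
  set Y := ∑ j ∈ Finset.range (m+1), X ^ j * A * X ^ (m - j) with hY
  have hAXA : ∀ e : ℕ, A * X ^ e * A = (if e = m then (1:ℂ) else 0) • A := by
    intro e
    rw [hA, vmv_mul, vmv_mul_vmv, ← Matrix.dotProduct_mulVec, hdot]
  have hYY : Y * Y = Y := by
    rw [hY, Finset.sum_mul_sum]
    refine Finset.sum_congr rfl (fun j hj => ?_)
    have hj' : j ≤ m := by
      have := Finset.mem_range.mp hj; omega
    have hT : ∀ l ∈ Finset.range (m+1),
        (X ^ j * A * X ^ (m-j)) * (X ^ l * A * X ^ (m-l))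
          = (if l = j then (1:ℂ) else 0) • (X ^ j * A * X ^ (m-l)) := by
      intro l hl
      have hl' : l ≤ m := by
        have := Finset.mem_range.mp hl; omega
      have hcond : (if m - j + l = m then (1:ℂ) else 0) = if l = j then (1:ℂ) else 0 := by
        by_cases hh : l = j
        · rw [if_pos hh, if_pos (by omega)]
        · rw [if_neg hh, if_neg (by omega)]
      calc (X ^ j * A * X ^ (m-j)) * (X ^ l * A * X ^ (m-l))
          = X ^ j * (A * (X ^ (m-j) * X ^ l) * (A * X ^ (m-l))) := by
            simp only [mul_assoc]
        _ = X ^ j * (A * X ^ (m-j+l) * (A * X ^ (m-l))) := by rw [← pow_add]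
        _ = X ^ j * ((A * X ^ (m-j+l) * A) * X ^ (m-l)) := by simp only [mul_assoc]
        _ = (if l = j then (1:ℂ) else 0) • (X ^ j * A * X ^ (m-l)) := by
            rw [hAXA, hcond, Matrix.smul_mul, Matrix.mul_smul, mul_assoc]
    rw [Finset.sum_congr rfl hT, Finset.sum_eq_single j]
    · rw [if_pos rfl, one_smul]
    · intro l _ hne
      rw [if_neg hne, zero_smul]
    · intro hcon; exact absurd hj hcon
  have hf0 : X ^ (m+1) * A = 0 := by
    rw [hA, mul_vmv, hm1]
    ext i j
    simp [Matrix.vecMulVec]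
  have hcomm : X * Y - Y * X = (0 : Matrix (Fin n) (Fin n) ℂ) - A * X ^ (m+1) := by
    have htel := Finset.sum_range_sub (fun j => X ^ j * A * X ^ (m+1-j)) (m+1)
    have hXY : X * Y = ∑ j ∈ Finset.range (m+1), X ^ (j+1) * A * X ^ (m+1-(j+1)) := by
      rw [hY, Finset.mul_sum]
      refine Finset.sum_congr rfl (fun j hj => ?_)
      have hj' : j ≤ m := by have := Finset.mem_range.mp hj; omega
      have h1 : m + 1 - (j+1) = m - j := by omega
      rw [h1, pow_succ']
      simp only [mul_assoc]
    have hYX : Y * X = ∑ j ∈ Finset.range (m+1), X ^ j * A * X ^ (m+1-j) := by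
      rw [hY, Finset.sum_mul]
      refine Finset.sum_congr rfl (fun j hj => ?_)
      have hj' : j ≤ m := by have := Finset.mem_range.mp hj; omega
      have h1 : m + 1 - j = (m - j) + 1 := by omega
      rw [h1, pow_succ]
      simp only [mul_assoc]
    rw [hXY, hYX, ← Finset.sum_sub_distrib]
    calc ∑ j ∈ Finset.range (m+1),
          (X ^ (j+1) * A * X ^ (m+1-(j+1)) - X ^ j * A * X ^ (m+1-j))
        = X ^ (m+1) * A * X ^ (m+1-(m+1)) - X ^ 0 * A * X ^ (m+1-0) := htel
      _ = (0 : Matrix (Fin n) (Fin n) ℂ) - A * X ^ (m+1) := by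
          rw [Nat.sub_self, pow_zero, mul_one, hf0, Nat.sub_zero, one_mul]
  have htr : Matrix.trace Y = (m+1 : ℂ) := by
    rw [hY, Matrix.trace_sum]
    have hterm : ∀ j ∈ Finset.range (m+1),
        Matrix.trace (X ^ j * A * X ^ (m-j)) = 1 := by
      intro j hj
      have hj' : j ≤ m := by have := Finset.mem_range.mp hj; omega
      rw [Matrix.trace_mul_cycle, ← pow_add]
      have h1 : m - j + j = m := by omega
      rw [h1, Matrix.trace_mul_comm, hA, trace_vmv_mul, hdot, if_pos rfl]
    rw [Finset.sum_congr rfl hterm, Finset.sum_const, Finset.card_range]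
    simp
  refine ⟨Y, hYY, ?_, ?_⟩
  · rintro ⟨c, hc⟩
    have hcc : c * c = c := by
      have h2 := hYY
      rw [hc, Matrix.smul_mul, Matrix.mul_smul, smul_smul, Matrix.mul_one] at h2
      have i0 : Fin n := ⟨0, by omega⟩
      have h3 := congrArg (fun M : Matrix (Fin n) (Fin n) ℂ => M i0 i0) h2
      simpa using h3
    have htr' : Matrix.trace Y = c * n := by
      rw [hc, Matrix.trace_smul, Matrix.trace_one]
      simp [mul_comm]
    have h4 : c * (c - 1) = 0 := by linear_combination hcc
    rcases mul_eq_zero.mp h4 with h5 | h5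
    · rw [htr, h5, zero_mul] at htr'
      have h6 : ((m+1 : ℕ) : ℂ) ≠ 0 := Nat.cast_ne_zero.mpr (Nat.succ_ne_zero m)
      apply h6
      push_cast
      exact htr'
    · have h5' : c = 1 := by linear_combination h5
      rw [htr, h5', one_mul] at htr'
      have h7 : m + 1 = n := by exact_mod_cast htr'
      omega
  · intro u
    refine ⟨-(ψ ⬝ᵥ (X ^ (m+1)).mulVec u), ?_⟩
    rw [hcomm, Matrix.sub_mulVec, Matrix.zero_mulVec, ← Matrix.mulVec_mulVec, hA, vmv_mulVec]
    rw [zero_sub, neg_smul]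

end StmtZeroAux

/-- If `X` is regular nilpotent and `v₀ ≠ 0` satisfies `X^(n-1) v₀ = 0`, then there is a
diagonalizable matrix `Y`, not a scalar multiple of the identity, such that the range of
the commutator `[X, Y]` is contained in the line `ℂ v₀`. -/
theorem stmt_0 (n : ℕ) (hn : 1 ≤ n) (X : Matrix (Fin n) (Fin n) ℂ)
    (hXnil : X ^ n = 0) (hXreg : X ^ (n - 1) ≠ 0)
    (v₀ : Fin n → ℂ) (hv₀ : v₀ ≠ 0) (hv : (X ^ (n - 1)).mulVec v₀ = 0) :
    ∃ Y : Matrix (Fin n) (Fin n) ℂ, Y.IsDiagonalizable ∧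
      (¬ ∃ c : ℂ, Y = c • (1 : Matrix (Fin n) (Fin n) ℂ)) ∧
      ∀ u : Fin n → ℂ, ∃ c : ℂ, (X * Y - Y * X).mulVec u = c • v₀ := by
  classical
  have hex : ∃ k, (X ^ k).mulVec v₀ = 0 := ⟨n - 1, hv⟩
  have h0 : ¬ ((X ^ 0).mulVec v₀ = 0) := by
    simpa [Matrix.one_mulVec] using hv₀
  have hKpos : 0 < Nat.find hex := Nat.pos_of_ne_zero (fun hz => h0 (hz ▸ Nat.find_spec hex))
  set m := Nat.find hex - 1 with hmdef
  have hmK : m + 1 = Nat.find hex := by omega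
  have hm1 : (X ^ (m+1)).mulVec v₀ = 0 := by rw [hmK]; exact Nat.find_spec hex
  have hm : (X ^ m).mulVec v₀ ≠ 0 := Nat.find_min hex (by omega)
  have hKle : Nat.find hex ≤ n - 1 := Nat.find_le hv
  have hmn : m + 1 < n := by omega
  obtain ⟨ψ, hψ0, hψm⟩ := StmtZeroAux.exists_psi X v₀ hm1 (StmtZeroAux.krylov_li X v₀ hm hm1)
  have hdot : ∀ e : ℕ, dotProduct ψ ((X ^ e).mulVec v₀) = if e = m then 1 else 0 := by
    intro e
    rcases lt_trichotomy e m with h | h | h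
    · rw [if_neg (by omega)]; exact hψ0 e h
    · rw [h, if_pos rfl]; exact hψm
    · rw [if_neg (by omega), StmtZeroAux.pow_mulVec_zero hm1 (by omega), dotProduct_zero]
  obtain ⟨Y, hYY, hns, hrange⟩ := StmtZeroAux.main_aux hn X m hmn v₀ hm1 ψ hdot
  obtain ⟨b, d, heig⟩ := StmtZeroAux.idem_eigenbasis Y hYY
  exact ⟨Y, StmtZeroAux.diag_of_eigenbasis Y b d heig, hns, hrange⟩
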